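/- arXiv:1401.6263 — 2 statements merged into one kernel-verified Lean document; each statement's English description precedes it below -/
import Mathlib

section
/- Let m be a natural number and let G = (Fin m → ℤ) be the free abelian group of rank m. An element u of the group ring ℤ[G] (the additive monoid algebra AddMonoidAlgebra ℤ G) is a unit if and only if there exists g ∈ G such that u = single g 1 or u = single g (−1); that is, the units of ℤ[G] are precisely the elements ±e^g for g ∈ G (i.e., up to sign, the monomials). -/
open AddMonoidAlgebra

private lemma mul_apply_max' {A : Type*} [AddCommGroup A] [LinearOrder A] [IsOrderedCancelAddMonoid A]
    {p q : AddMonoidAlgebra ℤ A} (hp : p.coeff.support.Nonempty) (hq : q.coeff.support.Nonempty) :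
    (p * q).coeff (p.coeff.support.max' hp + q.coeff.support.max' hq)
      = p.coeff (p.coeff.support.max' hp) * q.coeff (q.coeff.support.max' hq) := by
  classical
  rw [AddMonoidAlgebra.coeff_mul, Finsupp.sum,
    Finset.sum_eq_single (p.coeff.support.max' hp)]
  · rw [Finsupp.sum, Finset.sum_eq_single (q.coeff.support.max' hq)]
    · rw [if_pos rfl]
    · intro b hb hne
      exact if_neg fun he => hne (add_left_cancel he)
    · intro h
      rw [if_pos rfl, Finsupp.notMem_support_iff.1 h, mul_zero]
  · intro a ha hne
    refine Finset.sum_eq_zero fun b hb => if_neg fun he => ?_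
    have h1 : a < p.coeff.support.max' hp := (Finset.le_max' _ a ha).lt_of_ne hne
    have h2 : b ≤ q.coeff.support.max' hq := Finset.le_max' _ b hb
    exact absurd he (add_lt_add_of_lt_of_le h1 h2).ne
  · intro h
    refine Finset.sum_eq_zero fun b _ => ite_eq_right_iff.mpr fun _ => ?_
    rw [Finsupp.notMem_support_iff.1 h, zero_mul]

private lemma mul_apply_min' {A : Type*} [AddCommGroup A] [LinearOrder A] [IsOrderedCancelAddMonoid A]
    {p q : AddMonoidAlgebra ℤ A} (hp : p.coeff.support.Nonempty) (hq : q.coeff.support.Nonempty) :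
    (p * q).coeff (p.coeff.support.min' hp + q.coeff.support.min' hq)
      = p.coeff (p.coeff.support.min' hp) * q.coeff (q.coeff.support.min' hq) := by
  classical
  rw [AddMonoidAlgebra.coeff_mul, Finsupp.sum,
    Finset.sum_eq_single (p.coeff.support.min' hp)]
  · rw [Finsupp.sum, Finset.sum_eq_single (q.coeff.support.min' hq)]
    · rw [if_pos rfl]
    · intro b hb hne
      exact if_neg fun he => hne (add_left_cancel he)
    · intro h
      rw [if_pos rfl, Finsupp.notMem_support_iff.1 h, mul_zero]
  · intro a ha hne
    refine Finset.sum_eq_zero fun b hb => if_neg fun he => ?_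
    have h1 : p.coeff.support.min' hp < a := (Finset.min'_le _ a ha).lt_of_ne (Ne.symm hne)
    have h2 : q.coeff.support.min' hq ≤ b := Finset.min'_le _ b hb
    exact absurd he.symm (add_lt_add_of_lt_of_le h1 h2).ne
  · intro h
    refine Finset.sum_eq_zero fun b _ => ite_eq_right_iff.mpr fun _ => ?_
    rw [Finsupp.notMem_support_iff.1 h, zero_mul]

private lemma support_singleton_of_mul_eq_one {A : Type*} [AddCommGroup A] [LinearOrder A] [IsOrderedCancelAddMonoid A]
    {p q : AddMonoidAlgebra ℤ A} (h : p * q = 1) :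
    ∃ a : A, p = AddMonoidAlgebra.single a 1 ∨ p = AddMonoidAlgebra.single a (-1) := by
  classical
  have hone : (1 : AddMonoidAlgebra ℤ A).coeff.support = {0} := by
    rw [AddMonoidAlgebra.one_def]
    exact Finsupp.support_single_ne_zero _ one_ne_zero
  have hp : p.coeff.support.Nonempty := by
    rcases Finset.eq_empty_or_nonempty p.coeff.support with h0 | h0
    · rw [Finsupp.support_eq_empty, AddMonoidAlgebra.coeff_eq_zero] at h0
      rw [h0, zero_mul] at h
      exact absurd h zero_ne_one
    · exact h0
  have hq : q.coeff.support.Nonempty := by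
    rcases Finset.eq_empty_or_nonempty q.coeff.support with h0 | h0
    · rw [Finsupp.support_eq_empty, AddMonoidAlgebra.coeff_eq_zero] at h0
      rw [h0, mul_zero] at h
      exact absurd h zero_ne_one
    · exact h0
  set A1 := p.coeff.support.max' hp with hA1
  set B1 := q.coeff.support.max' hq with hB1
  set A0 := p.coeff.support.min' hp with hA0
  set B0 := q.coeff.support.min' hq with hB0
  have hmem1 : A1 + B1 ∈ (p * q).coeff.support := by
    rw [Finsupp.mem_support_iff, mul_apply_max' hp hq]
    exact mul_ne_zero (Finsupp.mem_support_iff.1 (p.coeff.support.max'_mem hp))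
      (Finsupp.mem_support_iff.1 (q.coeff.support.max'_mem hq))
  have hmem0 : A0 + B0 ∈ (p * q).coeff.support := by
    rw [Finsupp.mem_support_iff, mul_apply_min' hp hq]
    exact mul_ne_zero (Finsupp.mem_support_iff.1 (p.coeff.support.min'_mem hp))
      (Finsupp.mem_support_iff.1 (q.coeff.support.min'_mem hq))
  rw [h, hone, Finset.mem_singleton] at hmem1 hmem0
  have hAeq : A0 = A1 := by
    have hale : A0 ≤ A1 := Finset.min'_le _ _ (p.coeff.support.max'_mem hp)
    have hble : B0 ≤ B1 := Finset.min'_le _ _ (q.coeff.support.max'_mem hq)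
    have : A0 + B0 = A1 + B1 := by rw [hmem1, hmem0]
    have h3 : A1 + B0 ≤ A0 + B0 := by
      rw [this]; exact add_le_add_right hble A1
    exact le_antisymm hale (le_of_add_le_add_right h3)
  have hsupp : p.coeff.support = {A1} := by
    apply Finset.eq_singleton_iff_nonempty_unique_mem.2 ⟨hp, fun a ha => ?_⟩
    exact le_antisymm (Finset.le_max' _ a ha) (hAeq ▸ Finset.min'_le _ a ha)
  have hps : p = AddMonoidAlgebra.single A1 (p.coeff A1) := by
    have := Finsupp.support_subset_singleton (f := p.coeff) (a := A1)
    exact AddMonoidAlgebra.coeff_injective (this.1 (hsupp.le))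
  -- q is also a single, at B1
  have hsuppq : q.coeff.support = {B1} := by
    have hBeq : B0 = B1 := by
      have : A0 + B0 = A1 + B1 := by rw [hmem1, hmem0]
      rw [hAeq] at this
      exact add_left_cancel this
    apply Finset.eq_singleton_iff_nonempty_unique_mem.2 ⟨hq, fun b hb => ?_⟩
    exact le_antisymm (Finset.le_max' _ b hb) (hBeq ▸ Finset.min'_le _ b hb)
  have hqs : q = AddMonoidAlgebra.single B1 (q.coeff B1) := by
    have := Finsupp.support_subset_singleton (f := q.coeff) (a := B1)
    exact AddMonoidAlgebra.coeff_injective (this.1 (hsuppq.le))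
  have hmul : AddMonoidAlgebra.single (A1 + B1) (p.coeff A1 * q.coeff B1)
      = (1 : AddMonoidAlgebra ℤ A) := by
    rw [← AddMonoidAlgebra.single_mul_single, ← hps, ← hqs, h]
  rw [hmem1, AddMonoidAlgebra.one_def] at hmul
  have hcoeff : p.coeff A1 * q.coeff B1 = 1 := by
    have := congrArg (fun f : AddMonoidAlgebra ℤ A => f.coeff 0) hmul
    simpa using this
  have : IsUnit (p.coeff A1) := IsUnit.of_mul_eq_one _ hcoeff
  rcases Int.isUnit_iff.1 this with h1 | h1
  · exact ⟨A1, Or.inl (by rw [hps, h1])⟩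
  · exact ⟨A1, Or.inr (by rw [hps, h1])⟩

/-- The units of the group ring `ℤ[G]` of the free abelian group `G = Fin m → ℤ`
are precisely the elements `± e^g` for `g ∈ G`, i.e. up to sign, the monomials. -/
theorem units_of_integral_group_ring_free_abelian (m : ℕ)
    (u : AddMonoidAlgebra ℤ (Fin m → ℤ)) :
    IsUnit u ↔ ∃ g : Fin m → ℤ,
      u = AddMonoidAlgebra.single g 1 ∨ u = AddMonoidAlgebra.single g (-1) := by
  constructor
  · intro hu
    obtain ⟨v, hv⟩ := hu.exists_right_inv
    let e : (Fin m → ℤ) ≃+ Lex (Fin m → ℤ) :=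
      { toLex with map_add' := fun _ _ => rfl }
    let Φ := AddMonoidAlgebra.domCongr ℤ ℤ e
    have hΦ : Φ u * Φ v = 1 := by rw [← map_mul, hv, map_one]
    obtain ⟨a, ha | ha⟩ := support_singleton_of_mul_eq_one (A := Lex (Fin m → ℤ)) hΦ
    · refine ⟨e.symm a, Or.inl (Φ.injective ?_)⟩
      rw [ha, AddMonoidAlgebra.domCongr_single, e.apply_symm_apply]
    · refine ⟨e.symm a, Or.inr (Φ.injective ?_)⟩
      rw [ha, AddMonoidAlgebra.domCongr_single, e.apply_symm_apply]
  · rintro ⟨g, rfl | rfl⟩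
    · refine IsUnit.of_mul_eq_one (AddMonoidAlgebra.single (-g) 1) ?_
      rw [AddMonoidAlgebra.single_mul_single, add_neg_cancel, one_mul,
        AddMonoidAlgebra.one_def]
    · refine IsUnit.of_mul_eq_one (AddMonoidAlgebra.single (-g) (-1)) ?_
      rw [AddMonoidAlgebra.single_mul_single, add_neg_cancel, neg_mul_neg, one_mul,
        AddMonoidAlgebra.one_def]
end

section
/- Let m be a natural number and let G = (Fin m → ℤ) be the free abelian group of rank m. The group of units of the group ring ℤ[G] (the additive monoid algebra AddMonoidAlgebra ℤ G) is isomorphic, as a group, to (ℤ/2ℤ) × G, via the map sending (ε, g) to ±e^g according to the sign ε. -/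
namespace UnitGroupAux

variable {m : ℕ}

local notation "G" => (Fin m → ℤ)

/-- strict lex order comparison -/
private abbrev llt (x y : Fin m → ℤ) : Prop := toLex x < toLex y

private lemma llt_trans {x y z : Fin m → ℤ} (h1 : llt x y) (h2 : llt y z) : llt x z :=
  trans_of ((· < ·) : Lex (Fin m → ℤ) → Lex (Fin m → ℤ) → Prop) h1 h2

private lemma llt_irrefl (x : Fin m → ℤ) : ¬ llt x x :=
  irrefl_of ((· < ·) : Lex (Fin m → ℤ) → Lex (Fin m → ℤ) → Prop) (toLex x)

private lemma llt_tri (x y : Fin m → ℤ) : llt x y ∨ x = y ∨ llt y x := by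
  have := (Pi.isTrichotomous_lex (β := fun _ : Fin m => ℤ) (· < ·)
    (@fun _ => ((· < ·) : ℤ → ℤ → Prop))
    (IsWellFounded.wf (r := ((· < ·) : Fin m → Fin m → Prop)))).trichotomous x y
  exact or_iff_not_imp_left.2 fun h1 => or_iff_not_imp_right.2 fun h2 => this h1 h2

private lemma llt_add_right {x a c : Fin m → ℤ} (h : llt x a) : llt (x + c) (a + c) := by
  obtain ⟨i, hj, hi⟩ := h
  exact ⟨i, fun j hji => by simpa using congrArg (· + c j) (hj j hji),
    by simpa using add_lt_add_right hi (c i)⟩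

private lemma llt_add_left {x a c : Fin m → ℤ} (h : llt x a) : llt (c + x) (c + a) := by
  obtain ⟨i, hj, hi⟩ := h
  exact ⟨i, fun j hji => by simpa using congrArg (c j + ·) (hj j hji),
    by simpa using add_lt_add_left hi (c i)⟩

private lemma exists_lexmax (s : Finset (Fin m → ℤ)) (h : s.Nonempty) :
    ∃ a ∈ s, ∀ x ∈ s, x = a ∨ llt x a := by
  classical
  induction s using Finset.induction with
  | empty => exact absurd h (by simp)
  | @insert c s hc ih =>
    rcases s.eq_empty_or_nonempty with rfl | hs
    · exact ⟨c, by simp⟩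
    · obtain ⟨a, has, hmax⟩ := ih hs
      rcases llt_tri c a with hca | rfl | hac
      · exact ⟨a, Finset.mem_insert_of_mem has, by
          intro x hx
          rcases Finset.mem_insert.1 hx with rfl | hx
          · exact Or.inr hca
          · exact hmax x hx⟩
      · exact ⟨c, Finset.mem_insert_self _ _, by
          intro x hx
          rcases Finset.mem_insert.1 hx with rfl | hx
          · exact Or.inl rfl
          · exact hmax x hx⟩
      · exact ⟨c, Finset.mem_insert_self _ _, by
          intro x hx
          rcases Finset.mem_insert.1 hx with rfl | hx
          · exact Or.inl rfl
          · rcases hmax x hx with rfl | hxa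
            · exact Or.inr hac
            · exact Or.inr (llt_trans hxa hac)⟩

private lemma exists_lexmin (s : Finset (Fin m → ℤ)) (h : s.Nonempty) :
    ∃ a ∈ s, ∀ x ∈ s, x = a ∨ llt a x := by
  classical
  induction s using Finset.induction with
  | empty => exact absurd h (by simp)
  | @insert c s hc ih =>
    rcases s.eq_empty_or_nonempty with rfl | hs
    · exact ⟨c, by simp⟩
    · obtain ⟨a, has, hmin⟩ := ih hs
      rcases llt_tri a c with hac | rfl | hca
      · exact ⟨a, Finset.mem_insert_of_mem has, by
          intro x hx
          rcases Finset.mem_insert.1 hx with rfl | hx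
          · exact Or.inr hac
          · exact hmin x hx⟩
      · exact ⟨a, Finset.mem_insert_self _ _, by
          intro x hx
          rcases Finset.mem_insert.1 hx with rfl | hx
          · exact Or.inl rfl
          · exact hmin x hx⟩
      · exact ⟨c, Finset.mem_insert_self _ _, by
          intro x hx
          rcases Finset.mem_insert.1 hx with rfl | hx
          · exact Or.inl rfl
          · rcases hmin x hx with rfl | hax
            · exact Or.inr hca
            · exact Or.inr (llt_trans hca hax)⟩

private lemma mul_apply_lexmax {p q : AddMonoidAlgebra ℤ (Fin m → ℤ)} {a b : Fin m → ℤ}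
    (ha : ∀ x ∈ p.coeff.support, x = a ∨ llt x a) (hb : ∀ y ∈ q.coeff.support, y = b ∨ llt y b) :
    (p * q).coeff (a + b) = p.coeff a * q.coeff b := by
  classical
  rw [AddMonoidAlgebra.mul_apply, Finsupp.sum]
  rw [Finset.sum_eq_single a]
  · rw [Finsupp.sum, Finset.sum_eq_single b]
    · exact if_pos rfl
    · exact fun y _ hne => if_neg fun he => hne (add_left_cancel he)
    · intro hb'
      rw [if_pos rfl, Finsupp.notMem_support_iff.1 hb', mul_zero]
  · intro x hx hne
    apply Finset.sum_eq_zero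
    intro y hy
    refine if_neg fun he => ?_
    have h1 : llt x a := (ha x hx).resolve_left hne
    have h2 : llt (x + y) (a + b) := by
      rcases hb y hy with rfl | h3
      · exact llt_add_right h1
      · exact llt_trans (llt_add_right h1) (llt_add_left h3)
    rw [he] at h2
    exact llt_irrefl _ h2
  · intro ha'
    rw [Finsupp.sum, Finset.sum_eq_zero]
    intro y _
    rw [Finsupp.notMem_support_iff.1 ha', zero_mul, ite_self]

private lemma mul_apply_lexmin {p q : AddMonoidAlgebra ℤ (Fin m → ℤ)} {a b : Fin m → ℤ}
    (ha : ∀ x ∈ p.coeff.support, x = a ∨ llt a x) (hb : ∀ y ∈ q.coeff.support, y = b ∨ llt b y) :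
    (p * q).coeff (a + b) = p.coeff a * q.coeff b := by
  classical
  rw [AddMonoidAlgebra.mul_apply, Finsupp.sum]
  rw [Finset.sum_eq_single a]
  · rw [Finsupp.sum, Finset.sum_eq_single b]
    · exact if_pos rfl
    · exact fun y _ hne => if_neg fun he => hne (add_left_cancel he)
    · intro hb'
      rw [if_pos rfl, Finsupp.notMem_support_iff.1 hb', mul_zero]
  · intro x hx hne
    apply Finset.sum_eq_zero
    intro y hy
    refine if_neg fun he => ?_
    have h1 : llt a x := (ha x hx).resolve_left hne
    have h2 : llt (a + b) (x + y) := by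
      rcases hb y hy with rfl | h3
      · exact llt_add_right h1
      · exact llt_trans (llt_add_left h3) (llt_add_right h1)
    rw [he] at h2
    exact llt_irrefl _ h2
  · intro ha'
    rw [Finsupp.sum, Finset.sum_eq_zero]
    intro y _
    rw [Finsupp.notMem_support_iff.1 ha', zero_mul, ite_self]

/-- Every unit of `ℤ[ℤ^m]` is `± e^g`. -/
private lemma unit_is_trivial {u v : AddMonoidAlgebra ℤ (Fin m → ℤ)} (huv : u * v = 1) :
    ∃ (g : Fin m → ℤ) (r : ℤ), (r = 1 ∨ r = -1) ∧ u = AddMonoidAlgebra.single g r := by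
  classical
  have hu : u ≠ 0 := by rintro rfl; simp at huv
  have hv : v ≠ 0 := by rintro rfl; simp at huv
  obtain ⟨a, haS, hamax⟩ := exists_lexmax u.coeff.support (Finsupp.support_nonempty_iff.2 (AddMonoidAlgebra.coeff_eq_zero.not.2 hu))
  obtain ⟨a', ha'S, hamin⟩ := exists_lexmin u.coeff.support (Finsupp.support_nonempty_iff.2 (AddMonoidAlgebra.coeff_eq_zero.not.2 hu))
  obtain ⟨b, hbS, hbmax⟩ := exists_lexmax v.coeff.support (Finsupp.support_nonempty_iff.2 (AddMonoidAlgebra.coeff_eq_zero.not.2 hv))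
  obtain ⟨b', hb'S, hbmin⟩ := exists_lexmin v.coeff.support (Finsupp.support_nonempty_iff.2 (AddMonoidAlgebra.coeff_eq_zero.not.2 hv))
  have h1 : (u * v).coeff (a + b) = u.coeff a * v.coeff b := mul_apply_lexmax hamax hbmax
  have h2 : (u * v).coeff (a' + b') = u.coeff a' * v.coeff b' := mul_apply_lexmin hamin hbmin
  have hone : (1 : AddMonoidAlgebra ℤ (Fin m → ℤ)).coeff.support = {0} := by
    rw [AddMonoidAlgebra.one_def]
    exact Finsupp.support_single_ne_zero _ one_ne_zero
  have hmem1 : a + b ∈ (u * v).coeff.support := by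
    rw [Finsupp.mem_support_iff, h1]
    exact mul_ne_zero (Finsupp.mem_support_iff.1 haS) (Finsupp.mem_support_iff.1 hbS)
  have hmem2 : a' + b' ∈ (u * v).coeff.support := by
    rw [Finsupp.mem_support_iff, h2]
    exact mul_ne_zero (Finsupp.mem_support_iff.1 ha'S) (Finsupp.mem_support_iff.1 hb'S)
  rw [huv, hone, Finset.mem_singleton] at hmem1 hmem2
  -- a' = a
  have haa : a' = a := by
    rcases hamin a haS with h | h
    · exact h.symm ▸ rfl
    · rcases hbmin b hbS with h' | h'
      · exfalso
        have : llt (a' + b') (a + b) := h'.symm ▸ llt_add_right h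
        rw [hmem1, hmem2] at this
        exact llt_irrefl _ this
      · exfalso
        have : llt (a' + b') (a + b) := llt_trans (llt_add_right h) (llt_add_left h')
        rw [hmem1, hmem2] at this
        exact llt_irrefl _ this
  subst haa
  -- support u = {a'}
  have hsupp : u.coeff.support ⊆ {a'} := by
    intro x hx
    rw [Finset.mem_singleton]
    rcases hamax x hx with h | h
    · exact h
    · rcases hamin x hx with h' | h'
      · exact h'
      · exact absurd (llt_trans h' h) (llt_irrefl a')
  have hu_eq : u = AddMonoidAlgebra.single a' (u.coeff a') :=
    AddMonoidAlgebra.coeff_injective (Finsupp.support_subset_singleton.1 hsupp)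
  -- u a' is a unit of ℤ
  have hval : u.coeff a' * v.coeff b' = 1 := by
    rw [← h2, hmem2, huv, AddMonoidAlgebra.one_def, AddMonoidAlgebra.coeff_single, Finsupp.single_eq_same]
  have : IsUnit (u.coeff a') := ⟨⟨_, _, hval, by rw [mul_comm]; exact hval⟩, rfl⟩
  exact ⟨a', u.coeff a', Int.isUnit_iff.1 this, hu_eq⟩

private def sgn (ε : ZMod 2) : ℤ := if ε = 0 then 1 else -1

private lemma sgn_mul_self : ∀ ε : ZMod 2, sgn ε * sgn ε = 1 := by decide

private lemma sgn_add : ∀ ε δ : ZMod 2, sgn (ε + δ) = sgn ε * sgn δ := by decide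

private lemma sgn_ne_zero : ∀ ε : ZMod 2, sgn ε ≠ 0 := by decide

private lemma sgn_inj : ∀ ε δ : ZMod 2, sgn ε = sgn δ → ε = δ := by decide

private lemma sgn_one : sgn (0 : ZMod 2) = 1 := rfl

/-- the trivial unit `± e^g` as a unit -/
private noncomputable def triv (ε : ZMod 2) (g : Fin m → ℤ) : (AddMonoidAlgebra ℤ (Fin m → ℤ))ˣ where
  val := AddMonoidAlgebra.single g (sgn ε)
  inv := AddMonoidAlgebra.single (-g) (sgn ε)
  val_inv := by
    rw [AddMonoidAlgebra.single_mul_single, add_neg_cancel, sgn_mul_self,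
      AddMonoidAlgebra.one_def]
  inv_val := by
    rw [AddMonoidAlgebra.single_mul_single, neg_add_cancel, sgn_mul_self,
      AddMonoidAlgebra.one_def]

private noncomputable def trivHom :
    Multiplicative (ZMod 2 × (Fin m → ℤ)) →* (AddMonoidAlgebra ℤ (Fin m → ℤ))ˣ where
  toFun x := triv x.toAdd.1 x.toAdd.2
  map_one' := by
    refine Units.ext ?_
    show AddMonoidAlgebra.single (0 : Fin m → ℤ) (sgn 0) = ((1 : (AddMonoidAlgebra ℤ (Fin m → ℤ))ˣ) : AddMonoidAlgebra ℤ (Fin m → ℤ))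
    rw [sgn_one, ← AddMonoidAlgebra.one_def, Units.val_one]
  map_mul' x y := by
    refine Units.ext ?_
    show AddMonoidAlgebra.single (x.toAdd.2 + y.toAdd.2) (sgn (x.toAdd.1 + y.toAdd.1)) = _
    rw [Units.val_mul]
    show _ = AddMonoidAlgebra.single x.toAdd.2 (sgn x.toAdd.1) *
      AddMonoidAlgebra.single y.toAdd.2 (sgn y.toAdd.1)
    rw [AddMonoidAlgebra.single_mul_single, sgn_add]

private lemma trivHom_bij :
    Function.Bijective (trivHom (m := m)) := by
  constructor
  · intro x y h
    have h' : AddMonoidAlgebra.single x.toAdd.2 (sgn x.toAdd.1) =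
        AddMonoidAlgebra.single y.toAdd.2 (sgn y.toAdd.1) := congrArg Units.val h
    rcases AddMonoidAlgebra.single_inj.1 h' with ⟨h1, h2⟩ | ⟨h1, _⟩
    · have hε := sgn_inj _ _ h2
      have : x.toAdd = y.toAdd := Prod.ext hε h1
      exact Multiplicative.toAdd.injective this
    · exact absurd h1 (sgn_ne_zero _)
  · intro u
    obtain ⟨g, r, hr, hu⟩ := unit_is_trivial u.val_inv
    refine ⟨Multiplicative.ofAdd (if r = 1 then (0 : ZMod 2) else 1, g), Units.ext ?_⟩
    show AddMonoidAlgebra.single g (sgn (if r = 1 then (0 : ZMod 2) else 1)) = (u : _)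
    rw [hu]
    congr 1
    rcases hr with rfl | rfl
    · rfl
    · norm_num [sgn]

end UnitGroupAux

/-- The group of units of the group ring `ℤ[G]` of the free abelian group
`G = Fin m → ℤ` is isomorphic to `(ℤ/2ℤ) × G`, via the map sending `(ε, g)` to
`± e^g` according to the sign `ε`. -/
theorem unit_group_of_integral_group_ring_free_abelian (m : ℕ) :
    ∃ φ : Multiplicative (ZMod 2 × (Fin m → ℤ)) ≃* (AddMonoidAlgebra ℤ (Fin m → ℤ))ˣ,
      ∀ (ε : ZMod 2) (g : Fin m → ℤ),
        ((φ (Multiplicative.ofAdd (ε, g)) : (AddMonoidAlgebra ℤ (Fin m → ℤ))ˣ) :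
            AddMonoidAlgebra ℤ (Fin m → ℤ)) =
          if ε = 0 then AddMonoidAlgebra.single g 1 else AddMonoidAlgebra.single g (-1) := by
  refine ⟨MulEquiv.ofBijective _ UnitGroupAux.trivHom_bij, fun ε g => ?_⟩
  show AddMonoidAlgebra.single g (UnitGroupAux.sgn ε) = _
  unfold UnitGroupAux.sgn
  split_ifs <;> rfl
end
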